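/- Let n ≥ 1, 0 < α < n and 0 < q < ∞, let B = B(x₀,R) be an open ball in ℝ^n, let μ be a nonnegative locally finite Borel measure, and set μ_B = χ_B μ. Then for every x ∉ 2B = B(x₀,2R): T^q_α(μ_B)(x) ≤ ((n−α)q)^{−1/q} μ(B)/R^{n−α}. Consequently, there exists a constant c(n,q,α) > 0 depending only on n, q, α such that if ‖M_α(μ_B)‖_{L∞(B)} ≤ 1 then {x ∈ ℝ^n : T^q_α(μ_B)(x) > c(n,q,α)} ⊆ 2B. -/

import Mathlib

open MeasureTheory Metric Set ENNReal

noncomputable section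

/-- The nonlinear potential `T^q_α(μ)(x) = (∫_0^∞ (μ(B(x,r))/r^{n−α})^q dr/r)^{1/q}`. -/
def Tpot (n : ℕ) (α q : ℝ) (μ : Measure (EuclideanSpace ℝ (Fin n)))
    (x : EuclideanSpace ℝ (Fin n)) : ℝ≥0∞ :=
  (∫⁻ r in Set.Ioi (0 : ℝ),
      (μ (Metric.ball x r) / ENNReal.ofReal (r ^ ((n : ℝ) - α))) ^ q
        * ENNReal.ofReal (1 / r)) ^ (1 / q)

/-- The fractional maximal function `M_α(μ)(x) = sup_{r>0} μ(B(x,r))/r^{n−α}`. -/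
def Mfrac (n : ℕ) (α : ℝ) (μ : Measure (EuclideanSpace ℝ (Fin n)))
    (x : EuclideanSpace ℝ (Fin n)) : ℝ≥0∞ :=
  ⨆ (r : ℝ) (_ : 0 < r), μ (Metric.ball x r) / ENNReal.ofReal (r ^ ((n : ℝ) - α))

/-- The closed axis-parallel cube with center `c` and side length `s`. -/
def axisCube (n : ℕ) (c : EuclideanSpace ℝ (Fin n)) (s : ℝ) :
    Set (EuclideanSpace ℝ (Fin n)) :=
  {x | ∀ i, |x i - c i| ≤ s / 2}

/-- The weighted measure `|S|_σ = ∫_S σ dx`. -/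
def wMeasure (n : ℕ) (σ : EuclideanSpace ℝ (Fin n) → ℝ)
    (S : Set (EuclideanSpace ℝ (Fin n))) : ℝ≥0∞ :=
  ∫⁻ x in S, ENNReal.ofReal (σ x)

/-- `σ` is a weak `A∞` weight with constants `Cσ, θ`: it is nonnegative, locally
integrable, and `|E|_σ ≤ Cσ (|E|/|Q|)^θ |2Q|_σ` for all cubes `Q` and measurable `E ⊆ Q`. -/
def IsWeakAInfty (n : ℕ) (σ : EuclideanSpace ℝ (Fin n) → ℝ) (Cσ θ : ℝ) : Prop :=
  0 < Cσ ∧ 0 < θ ∧ (∀ x, 0 ≤ σ x) ∧ LocallyIntegrable σ ∧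
    ∀ (c : EuclideanSpace ℝ (Fin n)) (s : ℝ), 0 < s →
      ∀ E ⊆ axisCube n c s, MeasurableSet E →
        wMeasure n σ E ≤
          ENNReal.ofReal (Cσ * ((volume E).toReal / (volume (axisCube n c s)).toReal) ^ θ)
            * wMeasure n σ (axisCube n c (2 * s))

/-- The dyadic cube `2^k(m + [0,1)^n)`. -/
def dyadicCube (n : ℕ) (k : ℤ) (m : Fin n → ℤ) : Set (EuclideanSpace ℝ (Fin n)) :=
  {x | ∀ i, (2 : ℝ) ^ k * m i ≤ x i ∧ x i < (2 : ℝ) ^ k * (m i + 1)}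

/-- The unique dyadic cube of side length `2^k` containing `x`. -/
def dyadicCubeAt (n : ℕ) (k : ℤ) (x : EuclideanSpace ℝ (Fin n)) :
    Set (EuclideanSpace ℝ (Fin n)) :=
  dyadicCube n k (fun i => ⌊x i / (2 : ℝ) ^ k⌋)

/-- The dyadic nonlinear potential `𝒯(μ)(x) = (∑_{Q ∋ x} (μ(Q)/ℓ(Q)^{n−α})^q)^{1/q}`. -/
def Tdyadic (n : ℕ) (α q : ℝ) (μ : Measure (EuclideanSpace ℝ (Fin n)))
    (x : EuclideanSpace ℝ (Fin n)) : ℝ≥0∞ :=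
  (∑' k : ℤ,
      (μ (dyadicCubeAt n k x) / ENNReal.ofReal (((2 : ℝ) ^ k) ^ ((n : ℝ) - α))) ^ q) ^ (1 / q)

/-- The dyadic fractional maximal function `ℳ_α(μ)(x) = sup_{Q ∋ x} μ(Q)/ℓ(Q)^{n−α}`. -/
def Mdyadic (n : ℕ) (α : ℝ) (μ : Measure (EuclideanSpace ℝ (Fin n)))
    (x : EuclideanSpace ℝ (Fin n)) : ℝ≥0∞ :=
  ⨆ k : ℤ, μ (dyadicCubeAt n k x) / ENNReal.ofReal (((2 : ℝ) ^ k) ^ ((n : ℝ) - α))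

/-- `F(μ)(x) = (∑_{j∈ℤ} (μ(B(x,2^j))/2^{j(n−α)})^q)^{1/q}`. -/
def Fpot (n : ℕ) (α q : ℝ) (μ : Measure (EuclideanSpace ℝ (Fin n)))
    (x : EuclideanSpace ℝ (Fin n)) : ℝ≥0∞ :=
  (∑' j : ℤ,
      (μ (Metric.ball x ((2 : ℝ) ^ j)) / ENNReal.ofReal (((2 : ℝ) ^ j) ^ ((n : ℝ) - α))) ^ q) ^ (1 / q)

/-- The exponential function extended to `ℝ≥0∞`. -/
def expE (t : ℝ≥0∞) : ℝ≥0∞ :=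
  if t = ⊤ then ⊤ else ENNReal.ofReal (Real.exp t.toReal)

/-- The centered Hardy–Littlewood maximal function of a measure. -/
def Mhl (n : ℕ) (ν : Measure (EuclideanSpace ℝ (Fin n)))
    (x : EuclideanSpace ℝ (Fin n)) : ℝ≥0∞ :=
  ⨆ (r : ℝ) (_ : 0 < r), ν (Metric.ball x r) / volume (Metric.ball x r)


private lemma Tpot_restrict_le_aux (n : ℕ) (α q : ℝ) (hαn : α < n) (hq : 0 < q)
    (μ : Measure (EuclideanSpace ℝ (Fin n))) [IsLocallyFiniteMeasure μ]
    (x₀ : EuclideanSpace ℝ (Fin n)) (R : ℝ) (hR : 0 < R)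
    (x : EuclideanSpace ℝ (Fin n)) (hx : x ∉ Metric.ball x₀ (2 * R)) :
    Tpot n α q (μ.restrict (Metric.ball x₀ R)) x ≤
      ENNReal.ofReal ((((n : ℝ) - α) * q) ^ (-(1 / q)) *
        (μ (Metric.ball x₀ R)).toReal / R ^ ((n : ℝ) - α)) := by
  rw [Tpot]
  set p : ℝ := (n : ℝ) - α with hpdef
  have hp : 0 < p := by simp only [hpdef]; linarith
  set B := ball x₀ R with hB
  set A := μ B with hA
  have hAfin : A ≠ ⊤ := (measure_ball_lt_top).ne
  have hpq : 0 < p * q := mul_pos hp hq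
  set e : ℝ := -(p * q) - 1 with hedef
  have he : e < -1 := by simp only [hedef]; linarith
  have hb : ∀ r : ℝ,
      ((μ.restrict B) (Metric.ball x r) / ENNReal.ofReal (r ^ p)) ^ q * ENNReal.ofReal (1 / r)
        ≤ (Set.Ioi R).indicator (fun r => A ^ q * ENNReal.ofReal (r ^ e)) r := by
    intro r
    rcases le_or_gt r R with hr | hr
    · have hz : (μ.restrict B) (Metric.ball x r) = 0 := by
        rw [Measure.restrict_apply measurableSet_ball]
        have : Metric.ball x r ∩ B = ∅ := by
          ext z
          simp only [hB, Set.mem_inter_iff, mem_ball, Set.mem_empty_iff_false, iff_false]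
          rintro ⟨h1, h2⟩
          apply hx
          simp only [mem_ball]
          calc dist x x₀ ≤ dist x z + dist z x₀ := dist_triangle _ _ _
            _ < r + R := by rw [dist_comm x z]; exact add_lt_add h1 h2
            _ ≤ 2 * R := by linarith
        rw [this]; exact measure_empty
      rw [hz, ENNReal.zero_div, ENNReal.zero_rpow_of_pos hq, zero_mul]
      exact zero_le
    · rw [Set.indicator_of_mem (Set.mem_Ioi.mpr hr)]
      have hr0 : 0 < r := hR.trans hr
      have hle : (μ.restrict B) (Metric.ball x r) ≤ A := by
        rw [hA]
        calc (μ.restrict B) (Metric.ball x r) ≤ (μ.restrict B) Set.univ :=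
              measure_mono (Set.subset_univ _)
          _ = μ B := by rw [Measure.restrict_apply_univ]
      calc ((μ.restrict B) (Metric.ball x r) / ENNReal.ofReal (r ^ p)) ^ q * ENNReal.ofReal (1 / r)
          ≤ (A / ENNReal.ofReal (r ^ p)) ^ q * ENNReal.ofReal (1 / r) := by gcongr
        _ = A ^ q * ENNReal.ofReal (r ^ e) := by
            rw [ENNReal.div_rpow_of_nonneg _ _ hq.le,
              ENNReal.ofReal_rpow_of_pos (Real.rpow_pos_of_pos hr0 p),
              ← Real.rpow_mul hr0.le,
              div_eq_mul_inv, mul_assoc, mul_comm (ENNReal.ofReal (r ^ (p * q)))⁻¹,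
              ← div_eq_mul_inv,
              ← ENNReal.ofReal_div_of_pos (Real.rpow_pos_of_pos hr0 _)]
            congr 1
            rw [show e = -(p * q) + (-1) by rw [hedef]; ring, Real.rpow_add hr0,
              Real.rpow_neg hr0.le, Real.rpow_neg_one, one_div, div_eq_mul_inv]
            ring
  have hX : (0:ℝ) < R ^ (-(p * q)) / (p * q) := by positivity
  calc (∫⁻ r in Set.Ioi (0 : ℝ),
          ((μ.restrict B) (Metric.ball x r) / ENNReal.ofReal (r ^ p)) ^ q
            * ENNReal.ofReal (1 / r)) ^ (1 / q)
      ≤ (∫⁻ r in Set.Ioi (0 : ℝ),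
          (Set.Ioi R).indicator (fun r => A ^ q * ENNReal.ofReal (r ^ e)) r) ^ (1 / q) := by
        exact ENNReal.rpow_le_rpow (lintegral_mono hb) (by positivity)
    _ = (A ^ q * ∫⁻ r in Set.Ioi R, ENNReal.ofReal (r ^ e)) ^ (1 / q) := by
        rw [lintegral_indicator measurableSet_Ioi, Measure.restrict_restrict measurableSet_Ioi,
          Set.inter_eq_self_of_subset_left (Set.Ioi_subset_Ioi hR.le),
          lintegral_const_mul' _ _ (ENNReal.rpow_ne_top_of_nonneg hq.le hAfin)]
    _ = (A ^ q * ENNReal.ofReal (R ^ (-(p * q)) / (p * q))) ^ (1 / q) := by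
        rw [← ofReal_integral_eq_lintegral_ofReal (integrableOn_Ioi_rpow_of_lt he hR)
            (by filter_upwards [ae_restrict_mem measurableSet_Ioi] with r hr using
              Real.rpow_nonneg (hR.trans hr).le e),
          integral_Ioi_rpow_of_lt he hR,
          show e + 1 = -(p * q) by rw [hedef]; ring, neg_div_neg_eq]
    _ = A * ENNReal.ofReal ((R ^ (-(p * q)) / (p * q)) ^ (1 / q)) := by
        rw [ENNReal.mul_rpow_of_nonneg _ _ (by positivity), ← ENNReal.rpow_mul,
          mul_one_div_cancel hq.ne', ENNReal.rpow_one, ENNReal.ofReal_rpow_of_pos hX]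
    _ = ENNReal.ofReal (A.toReal * (R ^ (-(p * q)) / (p * q)) ^ (1 / q)) := by
        rw [ENNReal.ofReal_mul ENNReal.toReal_nonneg, ENNReal.ofReal_toReal hAfin]
    _ = ENNReal.ofReal ((p * q) ^ (-(1 / q)) * A.toReal / R ^ p) := by
        congr 1
        rw [Real.div_rpow (by positivity) hpq.le, ← Real.rpow_mul hR.le,
          show -(p * q) * (1 / q) = -p by field_simp,
          Real.rpow_neg hR.le, Real.rpow_neg hpq.le, div_eq_mul_inv, div_eq_mul_inv,
          div_eq_mul_inv]
        ring

/-- **Decay of the potential of a measure restricted to a ball** (proof of Theorem 1.3):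
for `x ∉ 2B`, `T^q_α(μ_B)(x) ≤ ((n−α)q)^{−1/q} μ(B)/R^{n−α}`; consequently there is
`c(n,q,α) > 0` such that `‖M_α(μ_B)‖_{L^∞(B)} ≤ 1` implies `{T^q_α(μ_B) > c} ⊆ 2B`. -/
theorem potential_localization (n : ℕ) (hn : 1 ≤ n) (α q : ℝ)
    (hα : 0 < α) (hαn : α < n) (hq : 0 < q) :
    (∀ (μ : Measure (EuclideanSpace ℝ (Fin n))), IsLocallyFiniteMeasure μ →
      ∀ (x₀ : EuclideanSpace ℝ (Fin n)) (R : ℝ), 0 < R →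
        ∀ x ∉ Metric.ball x₀ (2 * R),
          Tpot n α q (μ.restrict (Metric.ball x₀ R)) x ≤
            ENNReal.ofReal ((((n : ℝ) - α) * q) ^ (-(1 / q)) *
              (μ (Metric.ball x₀ R)).toReal / R ^ ((n : ℝ) - α))) ∧
    ∃ c : ℝ, 0 < c ∧
      ∀ (μ : Measure (EuclideanSpace ℝ (Fin n))), IsLocallyFiniteMeasure μ →
        ∀ (x₀ : EuclideanSpace ℝ (Fin n)) (R : ℝ), 0 < R →
          essSup (Mfrac n α (μ.restrict (Metric.ball x₀ R)))
              (volume.restrict (Metric.ball x₀ R)) ≤ 1 →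
          {x | ENNReal.ofReal c < Tpot n α q (μ.restrict (Metric.ball x₀ R)) x} ⊆
            Metric.ball x₀ (2 * R) := by
  have hp : (0:ℝ) < (n : ℝ) - α := by
    have : (1:ℝ) ≤ n := by exact_mod_cast hn
    linarith
  constructor
  · intro μ hμ x₀ R hR x hx
    haveI := hμ
    exact Tpot_restrict_le_aux n α q hαn hq μ x₀ R hR x hx
  · refine ⟨(((n : ℝ) - α) * q) ^ (-(1 / q)) * 2 ^ ((n : ℝ) - α), by positivity, ?_⟩
    intro μ hμ x₀ R hR hess x hxmem
    haveI := hμ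
    by_contra hx
    set p : ℝ := (n : ℝ) - α with hpdef
    set B := Metric.ball x₀ R with hBdef
    have hpq : 0 < p * q := mul_pos hp hq
    have h1 : ∀ᵐ y ∂(volume.restrict B), Mfrac n α (μ.restrict B) y ≤ 1 :=
      (ae_le_essSup _).mono fun y hy => hy.trans hess
    have hne : volume.restrict B ≠ 0 := by
      rw [Ne, Measure.restrict_eq_zero]
      exact (measure_ball_pos volume x₀ hR).ne'
    haveI : (ae (volume.restrict B)).NeBot := ae_neBot.mpr hne
    obtain ⟨y, hy1, hy2⟩ := (h1.and (ae_restrict_mem measurableSet_ball)).exists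
    have hR2 : (0:ℝ) < 2 * R := by linarith
    have hsub : B ⊆ Metric.ball y (2 * R) := by
      intro z hz
      rw [mem_ball]
      have h1' : dist z x₀ < R := mem_ball.mp hz
      have h2' : dist y x₀ < R := mem_ball.mp hy2
      calc dist z y ≤ dist z x₀ + dist x₀ y := dist_triangle _ _ _
        _ < R + R := by rw [dist_comm x₀ y]; exact add_lt_add h1' h2'
        _ = 2 * R := by ring
    have hball : (μ.restrict B) (Metric.ball y (2 * R)) = μ B := by
      rw [Measure.restrict_apply measurableSet_ball,
        Set.inter_eq_self_of_subset_right hsub]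
    have hMf : μ B / ENNReal.ofReal ((2 * R) ^ p) ≤ 1 := by
      refine le_trans ?_ hy1
      rw [← hball]
      exact le_iSup₂ (f := fun r (_ : 0 < r) =>
        (μ.restrict B) (Metric.ball y r) / ENNReal.ofReal (r ^ p)) (2 * R) hR2
    have hμB : μ B ≤ ENNReal.ofReal ((2 * R) ^ p) := by
      have h0 : ENNReal.ofReal ((2 * R) ^ p) ≠ 0 :=
        (ENNReal.ofReal_pos.mpr (Real.rpow_pos_of_pos hR2 p)).ne'
      have := (ENNReal.div_le_iff h0 ENNReal.ofReal_ne_top).mp hMf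
      simpa using this
    have htoReal : (μ B).toReal ≤ (2 * R) ^ p :=
      ENNReal.toReal_le_of_le_ofReal (by positivity) hμB
    have hb := Tpot_restrict_le_aux n α q hαn hq μ x₀ R hR x hx
    have hk : (0:ℝ) ≤ (p * q) ^ (-(1 / q)) := Real.rpow_nonneg hpq.le _
    have hle2 : ENNReal.ofReal ((p * q) ^ (-(1 / q)) * (μ B).toReal / R ^ p) ≤
        ENNReal.ofReal ((p * q) ^ (-(1 / q)) * 2 ^ p) := by
      apply ENNReal.ofReal_le_ofReal
      have hRp : (0:ℝ) < R ^ p := Real.rpow_pos_of_pos hR p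
      calc (p * q) ^ (-(1 / q)) * (μ B).toReal / R ^ p
          ≤ (p * q) ^ (-(1 / q)) * ((2 * R) ^ p) / R ^ p := by gcongr
        _ = (p * q) ^ (-(1 / q)) * 2 ^ p := by
            rw [Real.mul_rpow (by norm_num) hR.le]
            field_simp
    exact absurd hxmem (not_lt.mpr (hb.trans hle2))


end
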